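/- Fix η > 0. For x ∈ 𝒱 define u₁(x) = ∫₀^∞ e^{−max(a−x_d,0) − λ(x)a} da, u₂(x) = ∫₀^∞ e^{−(1+λ(x))a} da = 1/(1+λ(x)), F₂₁(x) = ∫₀^∞ 1_{x_d<a≤x_b} e^{−λ(x)a − max(a−x_d,0)} da and F₂₂(x) = ∫₀^{x_b} e^{−(1+λ(x))a} da. Then the map x ↦ n̄¹_x(0) := (λ(x)/η) · 1/(u₁(x) + u₂(x) · F₂₁(x)/(1 − F₂₂(x))) is continuous and bounded on 𝒱. -/

import Mathlib

open MeasureTheory Set Filter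

noncomputable section

/-- The viable set `𝒱 = {(x_b, x_d) : min(x_b, x_d) > 1}`. -/
def viable : Set (ℝ × ℝ) := {x : ℝ × ℝ | 1 < min x.1 x.2}

/-- `lam` is a Malthusian parameter function on `𝒱`. -/
def IsMalthusian (lam : ℝ × ℝ → ℝ) : Prop :=
  ∀ x ∈ viable, 0 < lam x ∧ (∫ a in (0:ℝ)..(min x.1 x.2), Real.exp (-(lam x) * a)) = 1

/-- `u₁(x) = ∫₀^∞ e^{−max(a−x_d,0) − λ(x)a} da`. -/
def u1 (lam : ℝ × ℝ → ℝ) (x : ℝ × ℝ) : ℝ :=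
  ∫ a in Ioi (0:ℝ), Real.exp (-max (a - x.2) 0 - lam x * a)

/-- `u₂(x) = ∫₀^∞ e^{−(1+λ(x))a} da`. -/
def u2 (lam : ℝ × ℝ → ℝ) (x : ℝ × ℝ) : ℝ :=
  ∫ a in Ioi (0:ℝ), Real.exp (-(1 + lam x) * a)

/-- `F₂₁(x) = ∫₀^∞ 1_{x_d < a ≤ x_b} e^{−λ(x)a − max(a−x_d,0)} da`. -/
def F21 (lam : ℝ × ℝ → ℝ) (x : ℝ × ℝ) : ℝ :=
  ∫ a in Ioi (0:ℝ),
    if x.2 < a ∧ a ≤ x.1 then Real.exp (-(lam x) * a - max (a - x.2) 0) else 0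

/-- `F₂₂(x) = ∫₀^{x_b} e^{−(1+λ(x))a} da`. -/
def F22 (lam : ℝ × ℝ → ℝ) (x : ℝ × ℝ) : ℝ :=
  ∫ a in (0:ℝ)..x.1, Real.exp (-(1 + lam x) * a)

/-- The stationary boundary value
`n̄¹_x(0) = (λ(x)/η) / (u₁(x) + u₂(x) F₂₁(x)/(1−F₂₂(x)))`. -/
def nbar0 (lam : ℝ × ℝ → ℝ) (η : ℝ) (x : ℝ × ℝ) : ℝ :=
  (lam x / η) * (1 / (u1 lam x + u2 lam x * (F21 lam x / (1 - F22 lam x))))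

/-! ### Auxiliary integral computations -/

lemma expint2 (c a b : ℝ) (hc : c ≠ 0) :
    (∫ t in a..b, Real.exp (-(c * t))) = (Real.exp (-(c * a)) - Real.exp (-(c * b))) / c := by
  have h : ∀ t : ℝ, HasDerivAt (fun u : ℝ => -(Real.exp (-(c * u)) / c)) (Real.exp (-(c * t))) t := by
    intro t
    have h1 : HasDerivAt (fun u : ℝ => -(c * u)) (-c) t := by
      have h := ((hasDerivAt_id t).const_mul c).neg
      simp only [mul_one, id_eq] at h
      exact h
    have h2 := (h1.exp.div_const c).neg
    refine h2.congr_deriv ?_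
    field_simp
  rw [intervalIntegral.integral_eq_sub_of_hasDerivAt (fun t _ => h t)
    (Continuous.intervalIntegrable (by continuity) a b)]
  ring

lemma expintIoi (b c : ℝ) (hb : 0 < b) :
    (∫ x in Ioi c, Real.exp (-(b * x))) = Real.exp (-(b * c)) / b := by
  rw [show (fun x : ℝ => Real.exp (-(b * x))) = (fun x : ℝ => (fun y : ℝ => Real.exp (-y)) (b * x))
    from rfl, integral_comp_mul_left_Ioi (fun y : ℝ => Real.exp (-y)) c hb,
    integral_exp_neg_Ioi, smul_eq_mul]
  rw [mul_comm]
  rw [div_eq_mul_inv]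

def gm (c m : ℝ) : ℝ := (1 - Real.exp (-(c * m))) / c

lemma gm_eq_integral {c : ℝ} (m : ℝ) (hc : c ≠ 0) :
    gm c m = ∫ a in (0:ℝ)..m, Real.exp (-(c * a)) := by
  rw [expint2 c 0 m hc]
  simp [gm]

lemma lam_char (lam : ℝ × ℝ → ℝ) (hlam : IsMalthusian lam) {x : ℝ × ℝ} (hx : x ∈ viable) :
    gm (lam x) (min x.1 x.2) = 1 := by
  obtain ⟨h0, h1⟩ := hlam x hx
  rw [gm_eq_integral _ h0.ne', ← h1]
  simp only [neg_mul]

lemma lam_lt_one (lam : ℝ × ℝ → ℝ) (hlam : IsMalthusian lam) {x : ℝ × ℝ} (hx : x ∈ viable) :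
    lam x < 1 := by
  have h := lam_char lam hlam hx
  have h0 := (hlam x hx).1
  rw [gm, div_eq_one_iff_eq h0.ne'] at h
  have := Real.exp_pos (-(lam x * min x.1 x.2))
  linarith

lemma gm_anti {m : ℝ} (hm : 0 < m) {c1 c2 : ℝ} (h1 : 0 < c1) (h12 : c1 < c2) :
    gm c2 m < gm c1 m := by
  rw [gm_eq_integral m (h1.trans h12).ne', gm_eq_integral m h1.ne']
  apply intervalIntegral.integral_lt_integral_of_continuousOn_of_le_of_exists_lt hm
  · exact (by continuity : Continuous fun t : ℝ => Real.exp (-(c2 * t))).continuousOn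
  · exact (by continuity : Continuous fun t : ℝ => Real.exp (-(c1 * t))).continuousOn
  · intro t ht
    have : 0 < t := ht.1
    apply Real.exp_le_exp.2
    nlinarith
  · refine ⟨m, ⟨hm.le, le_rfl⟩, Real.exp_lt_exp.2 ?_⟩
    nlinarith

lemma gm_antile {m : ℝ} (hm : 0 < m) {c1 c2 : ℝ} (h1 : 0 < c1) (h12 : c1 ≤ c2) :
    gm c2 m ≤ gm c1 m := by
  rcases eq_or_lt_of_le h12 with h | h
  · rw [h]
  · exact (gm_anti hm h1 h).le

lemma lam_cont (lam : ℝ × ℝ → ℝ) (hlam : IsMalthusian lam) : ContinuousOn lam viable := by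
  intro x₀ hx₀
  have hm₀ : 1 < min x₀.1 x₀.2 := hx₀
  have hl0 := (hlam x₀ hx₀).1
  have hchar₀ := lam_char lam hlam hx₀
  unfold ContinuousWithinAt
  rw [Metric.tendsto_nhds]
  intro ε hε
  set δ := min (ε / 2) (lam x₀ / 2) with hδdef
  have hδpos : 0 < δ := lt_min (by linarith) (by linarith)
  have hδε : δ < ε := lt_of_le_of_lt (min_le_left _ _) (by linarith)
  have hdl : δ ≤ lam x₀ / 2 := min_le_right _ _
  have hsub : 0 < lam x₀ - δ := by linarith
  have h1 : gm (lam x₀ + δ) (min x₀.1 x₀.2) < 1 := by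
    rw [← hchar₀]
    exact gm_anti (by linarith) hl0 (by linarith)
  have h2 : 1 < gm (lam x₀ - δ) (min x₀.1 x₀.2) := by
    rw [← hchar₀]
    exact gm_anti (by linarith) hsub (by linarith)
  have hcont : ∀ c : ℝ, Continuous (fun x : ℝ × ℝ => gm c (min x.1 x.2)) := by
    intro c
    unfold gm
    exact (continuous_const.sub
      ((continuous_const.mul (continuous_fst.min continuous_snd)).neg.rexp)).div_const c
  have hmem1 : {x : ℝ × ℝ | gm (lam x₀ + δ) (min x.1 x.2) < 1} ∈ nhdsWithin x₀ viable :=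
    nhdsWithin_le_nhds (((isOpen_lt (hcont _) continuous_const)).mem_nhds h1)
  have hmem2 : {x : ℝ × ℝ | (1:ℝ) < gm (lam x₀ - δ) (min x.1 x.2)} ∈ nhdsWithin x₀ viable :=
    nhdsWithin_le_nhds (((isOpen_lt continuous_const (hcont _))).mem_nhds h2)
  filter_upwards [hmem1, hmem2, self_mem_nhdsWithin] with x hx1 hx2 hxv
  have hmx : 1 < min x.1 x.2 := hxv
  have hlx := (hlam x hxv).1
  have hcharx := lam_char lam hlam hxv
  rw [Real.dist_eq, abs_sub_lt_iff]
  have hlt : lam x < lam x₀ + δ := by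
    by_contra h
    push_neg at h
    have := gm_antile (by linarith : (0:ℝ) < min x.1 x.2) (by linarith : 0 < lam x₀ + δ) h
    rw [hcharx] at this
    linarith
  have hgt : lam x₀ - δ < lam x := by
    by_contra h
    push_neg at h
    have := gm_antile (by linarith : (0:ℝ) < min x.1 x.2) hlx h
    rw [hcharx] at this
    linarith
  constructor <;> linarith


lemma u2_eq (lam : ℝ × ℝ → ℝ) (hlam : IsMalthusian lam) {x : ℝ × ℝ} (hx : x ∈ viable) :
    u2 lam x = 1 / (1 + lam x) := by
  have h0 := (hlam x hx).1
  have h1 : 0 < 1 + lam x := by linarith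
  rw [u2]
  simp only [neg_mul]
  rw [expintIoi (1 + lam x) 0 h1]
  simp [one_div]

lemma F22_eq (lam : ℝ × ℝ → ℝ) (hlam : IsMalthusian lam) {x : ℝ × ℝ} (hx : x ∈ viable) :
    F22 lam x = (1 - Real.exp (-((1 + lam x) * x.1))) / (1 + lam x) := by
  have h0 := (hlam x hx).1
  have h1 : 0 < 1 + lam x := by linarith
  rw [F22]
  simp only [neg_mul]
  rw [show (∫ a in (0:ℝ)..x.1, Real.exp (-((1 + lam x) * a)))
      = (Real.exp (-((1 + lam x) * 0)) - Real.exp (-((1 + lam x) * x.1))) / (1 + lam x)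
    from expint2 _ 0 _ h1.ne']
  simp

lemma u1_eq (lam : ℝ × ℝ → ℝ) (hlam : IsMalthusian lam) {x : ℝ × ℝ} (hx : x ∈ viable) :
    u1 lam x = (1 - Real.exp (-(lam x * x.2))) / lam x
      + Real.exp (-(lam x * x.2)) / (1 + lam x) := by
  have hx2 : 1 < x.2 := lt_of_lt_of_le hx (min_le_right _ _)
  have h0 := (hlam x hx).1
  have h1 : 0 < 1 + lam x := by linarith
  have hsplit : Ioi (0:ℝ) = Ioc 0 x.2 ∪ Ioi x.2 := (Ioc_union_Ioi_eq_Ioi (by linarith)).symm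
  have hcont : Continuous (fun a : ℝ => Real.exp (-max (a - x.2) 0 - lam x * a)) := by
    continuity
  have hi1 : IntegrableOn (fun a : ℝ => Real.exp (-max (a - x.2) 0 - lam x * a)) (Ioc 0 x.2) :=
    hcont.integrableOn_Ioc
  have heq2 : EqOn (fun a : ℝ => Real.exp x.2 * Real.exp (-((1 + lam x) * a)))
      (fun a : ℝ => Real.exp (-max (a - x.2) 0 - lam x * a)) (Ioi x.2) := by
    intro a ha
    have ha' : x.2 < a := ha
    simp only
    rw [max_eq_left (by linarith : (0:ℝ) ≤ a - x.2), ← Real.exp_add]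
    congr 1
    ring
  have hg : IntegrableOn (fun a : ℝ => Real.exp x.2 * Real.exp (-((1 + lam x) * a)))
      (Ioi x.2) := by
    have h := (exp_neg_integrableOn_Ioi x.2 h1).const_mul (Real.exp x.2)
    have heq : (fun a : ℝ => Real.exp x.2 * Real.exp (-((1 + lam x) * a)))
        = fun a : ℝ => Real.exp x.2 * Real.exp (-(1 + lam x) * a) := by
      funext a
      rw [neg_mul]
    rw [heq]
    exact h
  have hi2 : IntegrableOn (fun a : ℝ => Real.exp (-max (a - x.2) 0 - lam x * a)) (Ioi x.2) :=
    hg.congr_fun heq2 measurableSet_Ioi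
  rw [u1, hsplit, setIntegral_union (Ioc_disjoint_Ioi le_rfl) measurableSet_Ioi hi1 hi2]
  have e1 : (∫ a in Ioc 0 x.2, Real.exp (-max (a - x.2) 0 - lam x * a))
      = (1 - Real.exp (-(lam x * x.2))) / lam x := by
    rw [setIntegral_congr_fun measurableSet_Ioc
      (show EqOn (fun a : ℝ => Real.exp (-max (a - x.2) 0 - lam x * a))
        (fun a : ℝ => Real.exp (-(lam x * a))) (Ioc 0 x.2) by
        intro a ha
        simp only
        rw [max_eq_right (by linarith [ha.2] : a - x.2 ≤ 0)]
        congr 1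
        ring)]
    rw [← intervalIntegral.integral_of_le (by linarith : (0:ℝ) ≤ x.2), expint2 _ _ _ h0.ne']
    simp
  have e2 : (∫ a in Ioi x.2, Real.exp (-max (a - x.2) 0 - lam x * a))
      = Real.exp (-(lam x * x.2)) / (1 + lam x) := by
    rw [← setIntegral_congr_fun measurableSet_Ioi heq2, integral_const_mul, expintIoi _ _ h1,
      ← mul_div_assoc, ← Real.exp_add]
    congr 2
    ring
  rw [e1, e2]

lemma F21_eq (lam : ℝ × ℝ → ℝ) (hlam : IsMalthusian lam) {x : ℝ × ℝ} (hx : x ∈ viable) :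
    F21 lam x = Real.exp x.2 *
      ((Real.exp (-((1 + lam x) * x.2)) - Real.exp (-((1 + lam x) * max x.1 x.2)))
        / (1 + lam x)) := by
  have hx2 : 1 < x.2 := lt_of_lt_of_le hx (min_le_right _ _)
  have h0 := (hlam x hx).1
  have h1 : 0 < 1 + lam x := by linarith
  have key : EqOn (fun a : ℝ =>
      if x.2 < a ∧ a ≤ x.1 then Real.exp (-(lam x) * a - max (a - x.2) 0) else 0)
      (Set.indicator (Ioc x.2 x.1) (fun a : ℝ => Real.exp x.2 * Real.exp (-((1 + lam x) * a))))
      (Ioi (0:ℝ)) := by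
    intro a _
    by_cases h : x.2 < a ∧ a ≤ x.1
    · simp only [if_pos h, Set.indicator_of_mem (show a ∈ Ioc x.2 x.1 from h)]
      rw [max_eq_left (by linarith [h.1] : (0:ℝ) ≤ a - x.2), ← Real.exp_add]
      congr 1
      ring
    · simp only [if_neg h, Set.indicator_of_notMem (show a ∉ Ioc x.2 x.1 from h)]
  rw [F21, setIntegral_congr_fun measurableSet_Ioi key,
    MeasureTheory.integral_indicator measurableSet_Ioc]
  rw [Measure.restrict_restrict measurableSet_Ioc,
    inter_eq_self_of_subset_left
      (show Ioc x.2 x.1 ⊆ Ioi 0 from fun a ha => mem_Ioi.mpr (by linarith [ha.1]))]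
  rcases le_or_gt x.1 x.2 with h | h
  · rw [Ioc_eq_empty (not_lt.2 h), Measure.restrict_empty, integral_zero_measure,
      max_eq_right h]
    simp
  · rw [← intervalIntegral.integral_of_le h.le, intervalIntegral.integral_const_mul,
      expint2 _ _ _ h1.ne', max_eq_left h.le]

lemma facts (lam : ℝ × ℝ → ℝ) (hlam : IsMalthusian lam) {x : ℝ × ℝ} (hx : x ∈ viable) :
    0 < 1 - F22 lam x ∧
    0 < (1 - Real.exp (-(lam x * x.2))) / lam x ∧
    (1 - Real.exp (-(lam x * x.2))) / lam x
      ≤ u1 lam x + u2 lam x * (F21 lam x / (1 - F22 lam x)) := by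
  have hx2 : 1 < x.2 := lt_of_lt_of_le hx (min_le_right _ _)
  have h0 := (hlam x hx).1
  have h1 : 0 < 1 + lam x := by linarith
  have hE : 0 < 1 - F22 lam x := by
    rw [F22_eq lam hlam hx]
    have he := Real.exp_pos (-((1 + lam x) * x.1))
    rw [sub_pos, div_lt_one h1]
    linarith
  have hF21 : 0 ≤ F21 lam x := by
    rw [F21_eq lam hlam hx]
    apply mul_nonneg (Real.exp_pos _).le
    apply div_nonneg _ h1.le
    rw [sub_nonneg]
    apply Real.exp_le_exp.2
    have hm : x.2 ≤ max x.1 x.2 := le_max_right _ _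
    nlinarith
  have hu2 : 0 ≤ u2 lam x := by
    rw [u2_eq lam hlam hx]
    positivity
  have hlb : 0 < (1 - Real.exp (-(lam x * x.2))) / lam x := by
    apply div_pos _ h0
    have : Real.exp (-(lam x * x.2)) < 1 := Real.exp_lt_one_iff.2 (by nlinarith)
    linarith
  refine ⟨hE, hlb, ?_⟩
  have hterm : 0 ≤ u2 lam x * (F21 lam x / (1 - F22 lam x)) :=
    mul_nonneg hu2 (div_nonneg hF21 hE.le)
  have hu1 : (1 - Real.exp (-(lam x * x.2))) / lam x ≤ u1 lam x := by
    rw [u1_eq lam hlam hx]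
    have h5 : 0 ≤ Real.exp (-(lam x * x.2)) / (1 + lam x) := by positivity
    linarith
  linarith


/-- `u₂ = 1/(1+λ)`, and the map `x ↦ n̄¹_x(0)` is continuous and bounded on `𝒱`. -/
theorem nbar0_continuous_bounded (lam : ℝ × ℝ → ℝ) (hlam : IsMalthusian lam)
    (η : ℝ) (hη : 0 < η) :
    (∀ x ∈ viable, u2 lam x = 1 / (1 + lam x)) ∧
    ContinuousOn (nbar0 lam η) viable ∧
    (∃ C : ℝ, ∀ x ∈ viable, |nbar0 lam η x| ≤ C) := by
  refine ⟨fun x hx => u2_eq lam hlam hx, ?_, ⟨2 / η, ?_⟩⟩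
  · have hlc := lam_cont lam hlam
    have hlne : ∀ x ∈ viable, lam x ≠ 0 := fun x hx => ((hlam x hx).1).ne'
    have h1ne : ∀ x ∈ viable, (1:ℝ) + lam x ≠ 0 := fun x hx =>
      (by have := (hlam x hx).1; linarith : (0:ℝ) < 1 + lam x).ne'
    have hec : ContinuousOn (fun x : ℝ × ℝ => Real.exp (-(lam x * x.2))) viable :=
      ((hlc.mul continuous_snd.continuousOn).neg).rexp
    have hec2 : ContinuousOn (fun x : ℝ × ℝ => Real.exp (-((1 + lam x) * x.2))) viable :=
      (((continuousOn_const.add hlc).mul continuous_snd.continuousOn).neg).rexp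
    have hec3 : ContinuousOn
        (fun x : ℝ × ℝ => Real.exp (-((1 + lam x) * max x.1 x.2))) viable :=
      (((continuousOn_const.add hlc).mul
        (continuous_fst.max continuous_snd).continuousOn).neg).rexp
    have hec4 : ContinuousOn (fun x : ℝ × ℝ => Real.exp (-((1 + lam x) * x.1))) viable :=
      (((continuousOn_const.add hlc).mul continuous_fst.continuousOn).neg).rexp
    have hu1c : ContinuousOn (u1 lam) viable :=
      ((((continuousOn_const.sub hec).div hlc hlne).add
        (hec.div (continuousOn_const.add hlc) h1ne)).congr
        (fun x hx => u1_eq lam hlam hx))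
    have hu2c : ContinuousOn (u2 lam) viable :=
      ((continuousOn_const.div (continuousOn_const.add hlc) h1ne)).congr
        (fun x hx => u2_eq lam hlam hx)
    have hF21c : ContinuousOn (F21 lam) viable :=
      ((continuous_snd.continuousOn.rexp).mul
        ((hec2.sub hec3).div (continuousOn_const.add hlc) h1ne)).congr
        (fun x hx => F21_eq lam hlam hx)
    have hF22c : ContinuousOn (F22 lam) viable :=
      (((continuousOn_const.sub hec4).div (continuousOn_const.add hlc) h1ne)).congr
        (fun x hx => F22_eq lam hlam hx)
    have hEne : ∀ x ∈ viable, 1 - F22 lam x ≠ 0 := fun x hx =>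
      ((facts lam hlam hx).1).ne'
    have hDc : ContinuousOn
        (fun x => u1 lam x + u2 lam x * (F21 lam x / (1 - F22 lam x))) viable :=
      hu1c.add (hu2c.mul (hF21c.div (continuousOn_const.sub hF22c) hEne))
    have hDne : ∀ x ∈ viable,
        u1 lam x + u2 lam x * (F21 lam x / (1 - F22 lam x)) ≠ 0 := fun x hx => by
      have h := facts lam hlam hx
      exact (lt_of_lt_of_le h.2.1 h.2.2).ne'
    exact (hlc.div_const η).mul (continuousOn_const.div hDc hDne)
  · intro x hx
    obtain ⟨hE, hlb, hD⟩ := facts lam hlam hx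
    have h0 := (hlam x hx).1
    have h1l := lam_lt_one lam hlam hx
    have hx2 : 1 < x.2 := lt_of_lt_of_le hx (min_le_right _ _)
    set e := Real.exp (-(lam x * x.2)) with he
    set D := u1 lam x + u2 lam x * (F21 lam x / (1 - F22 lam x)) with hDdef
    have hDpos : 0 < D := lt_of_lt_of_le hlb hD
    have hnn : 0 ≤ nbar0 lam η x := by
      rw [nbar0]
      exact mul_nonneg (div_nonneg h0.le hη.le) (one_div_nonneg.2 hDpos.le)
    rw [abs_of_nonneg hnn, nbar0]
    have hinv : 1 / D ≤ 1 / ((1 - e) / lam x) := one_div_le_one_div_of_le hlb hD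
    have hrew : 1 / ((1 - e) / lam x) = lam x / (1 - e) := one_div_div _ _
    have hexp1 : e ≤ Real.exp (-(lam x)) := Real.exp_le_exp.2 (by nlinarith)
    have hexp2 : Real.exp (-(lam x)) ≤ 1 / (1 + lam x) := by
      rw [Real.exp_neg]
      rw [show (1:ℝ) / (1 + lam x) = (1 + lam x)⁻¹ from one_div _]
      exact inv_anti₀ (by linarith) (by linarith [Real.add_one_le_exp (lam x)])
    have h1e : lam x / 2 ≤ 1 - e := by
      have h3 : e * (1 + lam x) ≤ 1 := by
        calc e * (1 + lam x) ≤ (1 / (1 + lam x)) * (1 + lam x) :=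
              mul_le_mul_of_nonneg_right (hexp1.trans hexp2) (by linarith)
          _ = 1 := by field_simp
      nlinarith
    have hepos : 0 < 1 - e := by nlinarith
    have hfrac : lam x / (1 - e) ≤ 2 := (div_le_iff₀ hepos).2 (by linarith)
    calc lam x / η * (1 / D) ≤ lam x / η * (lam x / (1 - e)) := by
          apply mul_le_mul_of_nonneg_left _ (div_nonneg h0.le hη.le)
          rw [← hrew]
          exact hinv
      _ ≤ 1 / η * 2 :=
          mul_le_mul (by gcongr) hfrac (div_nonneg h0.le hepos.le)
            (one_div_nonneg.2 hη.le)
      _ = 2 / η := by ring
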